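/- Let X, Y be finite sets, W a channel from X to Y, c : X → [0,∞), ρ ∈ [−1,0)∪(0,1], ν ≥ 0. With F_AR(p_X, p̂_{X|Y}) = −(1/ρ) log Σ_{x,y} p_X(x)^{1+ρ} p̂_{X|Y}(x|y)^{−ρ} W(y|x) e^{ρν c(x)}: for any fixed conditional distribution p̂_{X|Y} with positive entries, max over probability mass functions p_X of F_AR(p_X, p̂_{X|Y}) equals (1/ρ) A^{(ρ,ν)}(p̂_{X|Y}|W), where A^{(ρ,ν)}(p̂_{X|Y}|W) = ρ log Σ_x e^{−ν c(x)} [ Σ_y p̂_{X|Y}(x|y)^{−ρ} W(y|x) ]^{−1/ρ}, and the maximum is attained at p_X(x) proportional to [ Σ_y p̂_{X|Y}(x|y)^{−ρ} W(y|x) e^{ρν c(x)} ]^{−1/ρ}. -/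

import Mathlib

open Finset Real

/-- Core inequality: for a pmf `p` and positive weights `g`,
`-(1/ρ) log (∑ p^{1+ρ} g) ≤ log (∑ g^{-1/ρ})`. -/
lemma core_ineq {X : Type*} [Fintype X] (g : X → ℝ) (hg : ∀ x, 0 < g x)
    (rho : ℝ) (hrho1 : -1 ≤ rho) (hrho2 : rho ≤ 1) (hrho3 : rho ≠ 0)
    (p : X → ℝ) (hp : ∀ x, 0 ≤ p x) (hp1 : ∑ x, p x = 1) :
    -(1 / rho) * Real.log (∑ x, p x ^ (1 + rho) * g x) ≤
      Real.log (∑ x, g x ^ (-(1 : ℝ) / rho)) := by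
  classical
  set S : ℝ := ∑ x, g x ^ (-(1 : ℝ) / rho) with hS
  set T : ℝ := ∑ x, p x ^ (1 + rho) * g x with hT
  have hne : (Finset.univ : Finset X).Nonempty := by
    by_contra h
    rw [Finset.not_nonempty_iff_eq_empty] at h
    simp [h] at hp1
  have hSpos : 0 < S := Finset.sum_pos (fun x _ => Real.rpow_pos_of_pos (hg x) _) hne
  rcases lt_or_gt_of_ne hrho3 with hneg | hpos
  · -- rho < 0
    rcases eq_or_lt_of_le hrho1 with h1 | h1
    · -- rho = -1
      subst h1
      have hT' : T = S := by
        rw [hT, hS]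
        refine Finset.sum_congr rfl fun x _ => ?_
        norm_num
      rw [hT']
      norm_num
    · -- -1 < rho < 0
      have h1p : 0 < 1 + rho := by linarith
      have h1p1 : 1 + rho < 1 := by linarith
      have hconj : Real.HolderConjugate (1 / (1 + rho)) (-(1 : ℝ) / rho) := by
        rw [Real.holderConjugate_iff]; constructor
        · rw [lt_div_iff₀ h1p]; linarith
        · rw [one_div, inv_inv]
          rw [show (-(1 : ℝ) / rho)⁻¹ = -rho by field_simp]
          ring
      have hHolder := Real.inner_le_Lp_mul_Lq_of_nonneg (Finset.univ (α := X))
        hconj (f := fun x => p x ^ (1 + rho)) (g := g)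
        (fun x _ => Real.rpow_nonneg (hp x) _) (fun x _ => (hg x).le)
      have hfP : ∑ x, (p x ^ (1 + rho)) ^ (1 / (1 + rho)) = 1 := by
        have he : ∀ x, (p x ^ (1 + rho)) ^ (1 / (1 + rho)) = p x := fun x => by
          rw [← Real.rpow_mul (hp x), mul_one_div_cancel (ne_of_gt h1p), Real.rpow_one]
        simp_rw [he]
        exact hp1
      rw [hfP, Real.one_rpow, one_mul,
        show (1 : ℝ) / (-1 / rho) = -rho by rw [one_div_div]; ring] at hHolder
      have hTle : T ≤ S ^ (-rho) := hHolder
      have hTpos : 0 < T := by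
        obtain ⟨x0, hx0⟩ : ∃ x, 0 < p x := by
          by_contra h
          push_neg at h
          have : ∑ x, p x = 0 := Finset.sum_eq_zero fun x _ => le_antisymm (h x) (hp x)
          rw [hp1] at this; norm_num at this
        refine Finset.sum_pos' (fun x _ => mul_nonneg (Real.rpow_nonneg (hp x) _) (hg x).le)
          ⟨x0, Finset.mem_univ x0, mul_pos (Real.rpow_pos_of_pos hx0 _) (hg x0)⟩
      have hlog : Real.log T ≤ -rho * Real.log S := by
        calc Real.log T ≤ Real.log (S ^ (-rho)) := Real.log_le_log hTpos hTle
        _ = -rho * Real.log S := Real.log_rpow hSpos _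
      have h2 := mul_le_mul_of_nonneg_left hlog
        (le_of_lt (one_div_pos.mpr (by linarith : (0:ℝ) < -rho)))
      have h3 : (1 / (-rho)) * (-rho * Real.log S) = Real.log S := by field_simp
      rw [h3] at h2
      calc -(1 / rho) * Real.log T = (1 / (-rho)) * Real.log T := by
            rw [div_neg]
      _ ≤ Real.log S := h2
  · -- 0 < rho ≤ 1
    have hconj : Real.HolderConjugate (1 + rho) ((1 + rho) / rho) := by
      rw [Real.holderConjugate_iff]; constructor
      · linarith
      · field_simp
    have hHolder := Real.inner_le_Lp_mul_Lq_of_nonneg (Finset.univ (α := X))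
      hconj (f := fun x => p x * g x ^ (1 / (1 + rho)))
      (g := fun x => g x ^ (-(1 / (1 + rho))))
      (fun x _ => mul_nonneg (hp x) (Real.rpow_nonneg (hg x).le _))
      (fun x _ => Real.rpow_nonneg (hg x).le _)
    have h1p : (0:ℝ) < 1 + rho := by linarith
    have hlhs : ∑ x, (p x * g x ^ (1 / (1 + rho))) * g x ^ (-(1 / (1 + rho))) = 1 := by
      rw [← hp1]
      refine Finset.sum_congr rfl fun x _ => ?_
      rw [mul_assoc, ← Real.rpow_add (hg x)]
      simp
    have hfP : ∑ x, (p x * g x ^ (1 / (1 + rho))) ^ (1 + rho) = T := by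
      rw [hT]
      refine Finset.sum_congr rfl fun x _ => ?_
      rw [Real.mul_rpow (hp x) (Real.rpow_nonneg (hg x).le _), ← Real.rpow_mul (hg x).le]
      congr 1
      rw [one_div_mul_cancel (ne_of_gt h1p), Real.rpow_one]
    have hgQ : ∑ x, (g x ^ (-(1 / (1 + rho)))) ^ ((1 + rho) / rho) = S := by
      rw [hS]
      refine Finset.sum_congr rfl fun x _ => ?_
      rw [← Real.rpow_mul (hg x).le]
      congr 1
      field_simp
    rw [hlhs, hfP, hgQ] at hHolder
    have hTnn : 0 ≤ T := Finset.sum_nonneg fun x _ =>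
      mul_nonneg (Real.rpow_nonneg (hp x) _) (hg x).le
    have hSle : S ^ (-rho) ≤ T := by
      have h2 : S ^ (-rho / (1 + rho)) ≤ T ^ (1 / (1 + rho)) := by
        have hSQ : 0 < S ^ (1 / ((1 + rho) / rho)) := Real.rpow_pos_of_pos hSpos _
        rw [← div_le_iff₀ hSQ] at hHolder
        calc S ^ (-rho / (1 + rho)) = S ^ (-(1 / ((1 + rho) / rho))) := by
              congr 1
              field_simp
        _ = 1 / S ^ (1 / ((1 + rho) / rho)) := by
              rw [Real.rpow_neg hSpos.le]
              simp [one_div]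
        _ ≤ T ^ (1 / (1 + rho)) := hHolder
      have := Real.rpow_le_rpow (Real.rpow_nonneg hSpos.le _) h2 h1p.le
      rwa [← Real.rpow_mul hSpos.le, ← Real.rpow_mul hTnn,
        div_mul_cancel₀ _ (ne_of_gt h1p), one_div_mul_cancel (ne_of_gt h1p),
        Real.rpow_one] at this
    have hTpos : 0 < T := lt_of_lt_of_le (Real.rpow_pos_of_pos hSpos _) hSle
    have hlog : -rho * Real.log S ≤ Real.log T := by
      calc -rho * Real.log S = Real.log (S ^ (-rho)) := (Real.log_rpow hSpos _).symm
      _ ≤ Real.log T := Real.log_le_log (Real.rpow_pos_of_pos hSpos _) hSle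
    have h2 := mul_le_mul_of_nonneg_left hlog (le_of_lt (one_div_pos.mpr hpos))
    have h3 : (1 / rho) * (-rho * Real.log S) = -Real.log S := by field_simp
    rw [h3] at h2
    linarith

theorem stmt_4 {X Y : Type*} [Fintype X] [Fintype Y]
    (W : X → Y → ℝ) (hW0 : ∀ x y, 0 ≤ W x y) (hW1 : ∀ x, ∑ y, W x y = 1)
    (c : X → ℝ) (hc : ∀ x, 0 ≤ c x)
    (rho : ℝ) (hrho1 : -1 ≤ rho) (hrho2 : rho ≤ 1) (hrho3 : rho ≠ 0)
    (nu : ℝ) (hnu : 0 ≤ nu)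
    (phat : X → Y → ℝ) (hphat0 : ∀ x y, 0 < phat x y)
    (hphat1 : ∀ y, ∑ x, phat x y = 1) :
    let FAR : (X → ℝ) → ℝ := fun p =>
      -(1 / rho) * Real.log (∑ x, ∑ y,
        (p x) ^ (1 + rho) * (phat x y) ^ (-rho) * W x y * Real.exp (rho * nu * c x))
    let A : ℝ := rho * Real.log (∑ x, Real.exp (-(nu * c x)) *
      (∑ y, (phat x y) ^ (-rho) * W x y) ^ (-(1 : ℝ) / rho))
    let pstar : X → ℝ := fun x =>
      (∑ y, (phat x y) ^ (-rho) * W x y * Real.exp (rho * nu * c x)) ^ (-(1 : ℝ) / rho) /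
        (∑ x', (∑ y, (phat x' y) ^ (-rho) * W x' y * Real.exp (rho * nu * c x')) ^ (-(1 : ℝ) / rho))
    (∀ p : X → ℝ, (∀ x, 0 ≤ p x) → ∑ x, p x = 1 → FAR p ≤ (1 / rho) * A) ∧
      FAR pstar = (1 / rho) * A := by
  classical
  intro FAR A pstar
  rcases isEmpty_or_nonempty X with hX | hX
  · constructor
    · intro p hp hp1
      rw [Finset.sum_of_isEmpty] at hp1
      norm_num at hp1
    · show -(1 / rho) * Real.log (∑ x, _) = (1 / rho) * (rho * Real.log (∑ x, _))
      rw [Finset.sum_of_isEmpty, Finset.sum_of_isEmpty, Real.log_zero]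
      ring
  -- nonempty case
  set g : X → ℝ := fun x =>
    (∑ y, phat x y ^ (-rho) * W x y) * Real.exp (rho * nu * c x) with hgdef
  have hgpos : ∀ x, 0 < g x := by
    intro x
    refine mul_pos ?_ (Real.exp_pos _)
    obtain ⟨y0, hy0⟩ : ∃ y, 0 < W x y := by
      by_contra hcon
      push_neg at hcon
      have h0 : ∑ y, W x y = 0 :=
        Finset.sum_eq_zero fun y _ => le_antisymm (hcon y) (hW0 x y)
      rw [hW1 x] at h0; norm_num at h0
    exact Finset.sum_pos'
      (fun y _ => mul_nonneg (Real.rpow_nonneg (hphat0 x y).le _) (hW0 x y))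
      ⟨y0, Finset.mem_univ y0, mul_pos (Real.rpow_pos_of_pos (hphat0 x y0) _) hy0⟩
  set S : ℝ := ∑ x, g x ^ (-(1 : ℝ) / rho) with hSdef
  have hSpos : 0 < S :=
    Finset.sum_pos (fun x _ => Real.rpow_pos_of_pos (hgpos x) _) Finset.univ_nonempty
  -- rewrite of the objective
  have hsum : ∀ p : X → ℝ,
      (∑ x, ∑ y, p x ^ (1 + rho) * phat x y ^ (-rho) * W x y * Real.exp (rho * nu * c x))
        = ∑ x, p x ^ (1 + rho) * g x := by
    intro p
    refine Finset.sum_congr rfl fun x _ => ?_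
    show _ = p x ^ (1 + rho) *
      ((∑ y, phat x y ^ (-rho) * W x y) * Real.exp (rho * nu * c x))
    rw [← mul_assoc, Finset.mul_sum, Finset.sum_mul]
    exact Finset.sum_congr rfl fun y _ => by ring
  have hFAR : ∀ p : X → ℝ,
      FAR p = -(1 / rho) * Real.log (∑ x, p x ^ (1 + rho) * g x) := by
    intro p
    show -(1 / rho) * Real.log _ = _
    rw [hsum p]
  -- rewrite of A
  have hA : (1 / rho) * A = Real.log S := by
    have hAs : (∑ x, Real.exp (-(nu * c x)) *
        (∑ y, phat x y ^ (-rho) * W x y) ^ (-(1 : ℝ) / rho)) = S := by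
      rw [hSdef]
      refine Finset.sum_congr rfl fun x _ => ?_
      rw [hgdef]
      rw [Real.mul_rpow (Finset.sum_nonneg fun y _ =>
        mul_nonneg (Real.rpow_nonneg (hphat0 x y).le _) (hW0 x y)) (Real.exp_pos _).le]
      rw [← Real.exp_mul]
      rw [show rho * nu * c x * (-(1 : ℝ) / rho) = -(nu * c x) by field_simp]
      ring
    show (1 / rho) * (rho * Real.log _) = _
    rw [hAs]
    field_simp
  -- rewrite of pstar
  have hpstar : pstar = fun x => g x ^ (-(1 : ℝ) / rho) / S := by
    funext x
    show (∑ y, phat x y ^ (-rho) * W x y * Real.exp (rho * nu * c x)) ^ (-(1 : ℝ) / rho) / _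
      = g x ^ (-(1 : ℝ) / rho) / S
    rw [hSdef, hgdef]
    congr 1
    · rw [← Finset.sum_mul]
    · refine Finset.sum_congr rfl fun x' _ => ?_
      rw [← Finset.sum_mul]
  constructor
  · intro p hp hp1
    rw [hFAR p, hA]
    exact core_ineq g hgpos rho hrho1 hrho2 hrho3 p hp hp1
  · rw [hFAR pstar, hA, hpstar]
    have hTstar : (∑ x, (g x ^ (-(1 : ℝ) / rho) / S) ^ (1 + rho) * g x) = S ^ (-rho) := by
      have hterm : ∀ x, (g x ^ (-(1 : ℝ) / rho) / S) ^ (1 + rho) * g x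
          = g x ^ (-(1 : ℝ) / rho) / S ^ (1 + rho) := by
        intro x
        rw [Real.div_rpow (Real.rpow_nonneg (hgpos x).le _) hSpos.le,
          ← Real.rpow_mul (hgpos x).le, div_mul_eq_mul_div,
          show g x ^ (-(1 : ℝ) / rho * (1 + rho)) * g x
              = g x ^ (-(1 : ℝ) / rho * (1 + rho) + 1) by
            rw [Real.rpow_add (hgpos x), Real.rpow_one],
          show -(1 : ℝ) / rho * (1 + rho) + 1 = -(1 : ℝ) / rho by field_simp; ring]
      simp_rw [hterm]
      rw [← Finset.sum_div, ← hSdef, div_eq_iff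
        (ne_of_gt (Real.rpow_pos_of_pos hSpos _)), ← Real.rpow_add hSpos,
        show -rho + (1 + rho) = (1 : ℝ) by ring, Real.rpow_one]
    rw [hTstar, Real.log_rpow hSpos]
    field_simp
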